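/- For every n ≥ 1, the following identity holds in the polynomial ring ℤ[x,y,s]: A_{n+1}(x,y,s) = (s+y)·A_n(x,y,s) + x·y·(∂/∂x + ∂/∂y + ∂/∂s) A_n(x,y,s). -/

import Mathlib

open Finset MvPolynomial

/-- The word `π(1)π(2)⋯π(n)` of a permutation, as a function on 0-based positions. -/
def permWord {n : ℕ} (π : Equiv.Perm (Fin n)) (i : ℕ) : ℕ :=
  if h : i < n then ((π ⟨i, h⟩ : Fin n) : ℕ) + 1 else 0

/-- Number of descents. -/
def desNum {n : ℕ} (π : Equiv.Perm (Fin n)) : ℕ :=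
  ((range (n - 1)).filter fun i => permWord π (i + 1) < permWord π i).card

/-- Number of big ascents. -/
def bascNum {n : ℕ} (π : Equiv.Perm (Fin n)) : ℕ :=
  ((range (n - 1)).filter fun i => permWord π i + 2 ≤ permWord π (i + 1)).card

/-- Number of successions. -/
def sucNum {n : ℕ} (π : Equiv.Perm (Fin n)) : ℕ :=
  ((range (n - 1)).filter fun i => permWord π (i + 1) = permWord π i + 1).card

/-- The trivariate Eulerian polynomial `A_n(x,y,s) ∈ ℤ[x,y,s]`, with
`x = X 0`, `y = X 1`, `s = X 2`. -/
noncomputable def trivEuler (n : ℕ) : MvPolynomial (Fin 3) ℤ :=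
  ∑ π : Equiv.Perm (Fin n), X 0 ^ bascNum π * X 1 ^ desNum π * X 2 ^ sucNum π


section aux
variable {n : ℕ}

variable {n : ℕ}

lemma permWord_le (π : Equiv.Perm (Fin n)) (i : ℕ) : permWord π i ≤ n := by
  unfold permWord
  split
  · exact Nat.succ_le_of_lt (π _).isLt
  · omega

lemma permWord_inj (π : Equiv.Perm (Fin n)) {i k : ℕ} (hi : i < n) (hk : k < n)
    (h : permWord π i = permWord π k) : i = k := by
  unfold permWord at h
  rw [dif_pos hi, dif_pos hk] at h
  have : π ⟨i, hi⟩ = π ⟨k, hk⟩ := Fin.ext (by omega)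
  have := congrArg Fin.val (π.injective this)
  simpa using this

/-- Insertion of the largest value `n+1` at slot `j`. -/
def ins (π : Equiv.Perm (Fin n)) (j : Fin (n + 1)) : Equiv.Perm (Fin (n + 1)) :=
  (finSuccEquiv' j).trans ((π.optionCongr).trans (finSuccEquiv' (Fin.last n)).symm)

lemma ins_apply_self (π : Equiv.Perm (Fin n)) (j : Fin (n + 1)) : ins π j j = Fin.last n := by
  simp [ins, finSuccEquiv'_at]

lemma ins_apply_succAbove (π : Equiv.Perm (Fin n)) (j : Fin (n + 1)) (k : Fin n) :
    ins π j (j.succAbove k) = Fin.castSucc (π k) := by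
  simp only [ins, Equiv.trans_apply, finSuccEquiv'_succAbove, Equiv.optionCongr_apply,
    Option.map_some, finSuccEquiv'_symm_some, Fin.succAbove_last]

lemma permWord_ins (π : Equiv.Perm (Fin n)) (j : Fin (n + 1)) (i : ℕ) (hi : i ≤ n) :
    permWord (ins π j) i =
      if i < (j : ℕ) then permWord π i
      else if i = (j : ℕ) then n + 1
      else permWord π (i - 1) := by
  have hi' : i < n + 1 := Nat.lt_succ_of_le hi
  rcases lt_trichotomy i (j : ℕ) with h | h | h
  · have hin : i < n := lt_of_lt_of_le h (Nat.lt_succ_iff.mp j.isLt)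
    have : (⟨i, hi'⟩ : Fin (n + 1)) = j.succAbove ⟨i, hin⟩ := by
      rw [Fin.succAbove_of_castSucc_lt]
      · rfl
      · exact h
    rw [if_pos h]
    unfold permWord
    rw [dif_pos hi', dif_pos hin, this, ins_apply_succAbove]
    simp
  · rw [if_neg (by omega), if_pos h]
    unfold permWord
    rw [dif_pos hi']
    rw [show (⟨i, hi'⟩ : Fin (n + 1)) = j from Fin.ext h, ins_apply_self]
    simp [Fin.last]
  · have h1 : 1 ≤ i := by omega
    have hin : i - 1 < n := by omega
    have : (⟨i, hi'⟩ : Fin (n + 1)) = j.succAbove ⟨i - 1, hin⟩ := by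
      rw [Fin.succAbove_of_le_castSucc]
      · apply Fin.ext; simp [Fin.succ]; omega
      · simp [Fin.le_def]; omega
    rw [if_neg (by omega), if_neg (by omega)]
    unfold permWord
    rw [dif_pos hi', dif_pos hin, this, ins_apply_succAbove]
    simp

lemma ins_bijective :
    Function.Bijective (fun p : Equiv.Perm (Fin n) × Fin (n + 1) => ins p.1 p.2) := by
  rw [Fintype.bijective_iff_injective_and_card]
  constructor
  · rintro ⟨π, j⟩ ⟨π', j'⟩ h
    simp only at h
    have hj : j = j' := by
      have h1 : ins π j j = Fin.last n := ins_apply_self π j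
      have h2 : ins π' j' j' = Fin.last n := ins_apply_self π' j'
      rw [h] at h1
      have := (ins π' j').injective (h1.trans h2.symm)
      exact this
    subst hj
    have hπ : π = π' := by
      ext k
      have h1 := ins_apply_succAbove π j k
      have h2 := ins_apply_succAbove π' j k
      rw [h] at h1
      have := h1.symm.trans h2
      exact congrArg Fin.val (Fin.castSucc_injective n this)
    simp [hπ]
  · simp only [Fintype.card_prod, Fintype.card_perm, Fintype.card_fin, Nat.factorial_succ]
    ring

end aux

section cnt

variable (P : ℕ → ℕ → Prop) [DecidableRel P]

/-- generic pair-statistic count -/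
def cntP (v : ℕ → ℕ) (m : ℕ) : ℕ :=
  ∑ i ∈ range m, if P (v i) (v (i + 1)) then 1 else 0

lemma cntP_eq_card (v : ℕ → ℕ) (m : ℕ) :
    cntP P v m = ((range m).filter fun i => P (v i) (v (i + 1))).card :=
  (Finset.card_filter _ _).symm

variable {n j : ℕ} {u w : ℕ → ℕ}

lemma cnt_insert (hn : 1 ≤ n) (hj1 : 1 ≤ j) (hjn : j ≤ n)
    (hlt : ∀ i < j, u i = w i) (hself : u j = n + 1)
    (hgt : ∀ i, j < i → i ≤ n → u i = w (i - 1)) :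
    cntP P u n + (if j < n then (if P (w (j - 1)) (w j) then 1 else 0) else 0)
      = cntP P w (n - 1) + (if P (w (j - 1)) (n + 1) then 1 else 0)
        + (if j < n then (if P (n + 1) (w j) then 1 else 0) else 0) := by
  have key : ∀ i < j - 1, (if P (u i) (u (i + 1)) then 1 else 0)
      = (if P (w i) (w (i + 1)) then (1:ℕ) else 0) := by
    intro i hi
    rw [hlt i (by omega), hlt (i + 1) (by omega)]
  have split_u : cntP P u n
      = (∑ i ∈ Ico 0 (j - 1), if P (w i) (w (i + 1)) then 1 else 0)
        + (if P (w (j - 1)) (n + 1) then 1 else 0)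
        + (∑ i ∈ Ico j n, if P (u i) (u (i + 1)) then 1 else 0) := by
    unfold cntP
    rw [range_eq_Ico, ← Finset.sum_Ico_consecutive _ (Nat.zero_le (j - 1)) (by omega : j - 1 ≤ n)]
    rw [Finset.sum_eq_sum_Ico_succ_bot (by omega : j - 1 < n)]
    have h1 : (if P (u (j-1)) (u (j-1+1)) then (1:ℕ) else 0)
        = (if P (w (j - 1)) (n + 1) then 1 else 0) := by
      rw [hlt (j-1) (by omega), show j - 1 + 1 = j by omega, hself]
    have h2 : ∀ i ∈ Ico 0 (j-1), (if P (u i) (u (i + 1)) then (1:ℕ) else 0)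
        = (if P (w i) (w (i + 1)) then (1:ℕ) else 0) := by
      intro i hi; exact key i (by simp at hi; omega)
    rw [Finset.sum_congr rfl h2, h1, show j - 1 + 1 = j by omega]
    ring
  have split_w : cntP P w (n - 1)
      = (∑ i ∈ Ico 0 (j - 1), if P (w i) (w (i + 1)) then 1 else 0)
        + (if j < n then (if P (w (j-1)) (w j) then 1 else 0) else 0)
        + (∑ i ∈ Ico j (n - 1), if P (w i) (w (i + 1)) then 1 else 0) := by
    unfold cntP
    rw [range_eq_Ico, ← Finset.sum_Ico_consecutive _ (Nat.zero_le (j - 1)) (by omega : j - 1 ≤ n - 1)]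
    by_cases hjn' : j < n
    · rw [Finset.sum_eq_sum_Ico_succ_bot (by omega : j - 1 < n - 1), if_pos hjn',
        show j - 1 + 1 = j by omega]
      ring
    · have hje : j = n := by omega
      subst hje
      rw [if_neg hjn', Ico_self, Finset.Ico_eq_empty (by omega : ¬ j < j - 1)]
      simp
  by_cases hjn' : j < n
  · have split_tail : (∑ i ∈ Ico j n, if P (u i) (u (i + 1)) then (1:ℕ) else 0)
        = (if P (n + 1) (w j) then 1 else 0)
          + (∑ i ∈ Ico j (n-1), if P (w i) (w (i + 1)) then 1 else 0) := by
      rw [Finset.sum_eq_sum_Ico_succ_bot (by omega : j < n)]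
      congr 1
      · rw [hself, hgt (j + 1) (by omega) (by omega), show j + 1 - 1 = j from rfl]
      · rw [Finset.sum_Ico_eq_sum_range, Finset.sum_Ico_eq_sum_range]
        rw [show n - (j + 1) = n - 1 - j by omega]
        apply Finset.sum_congr rfl
        intro i hi
        simp only [mem_range] at hi
        rw [hgt (j + 1 + i) (by omega) (by omega), hgt (j + 1 + i + 1) (by omega) (by omega)]
        rw [show j + 1 + i - 1 = j + i from by omega, show j + 1 + i + 1 - 1 = j + i + 1 from by omega]

    rw [split_u, split_w, split_tail]
    simp only [if_pos hjn']
    ring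
  · have hjeq : j = n := by omega
    rw [split_u, split_w, if_neg hjn', if_neg hjn']
    subst hjeq
    simp

lemma cnt_insert_zero (hn : 1 ≤ n)
    (hself : u 0 = n + 1)
    (hgt : ∀ i, 0 < i → i ≤ n → u i = w (i - 1)) :
    cntP P u n = cntP P w (n - 1) + (if P (n + 1) (w 0) then 1 else 0) := by
  unfold cntP
  rw [range_eq_Ico, Finset.sum_eq_sum_Ico_succ_bot (by omega : 0 < n)]
  have h0 : (if P (u 0) (u (0 + 1)) then (1:ℕ) else 0) = if P (n + 1) (w 0) then 1 else 0 := by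
    rw [hself, show (0:ℕ) + 1 = 1 from rfl, hgt 1 (by omega) (by omega)]
  have ht : (∑ i ∈ Ico (0 + 1) n, if P (u i) (u (i + 1)) then (1:ℕ) else 0)
      = ∑ i ∈ Ico 0 (n - 1), if P (w i) (w (i + 1)) then 1 else 0 := by
    rw [Finset.sum_Ico_eq_sum_range, Finset.sum_Ico_eq_sum_range,
      show n - (0 + 1) = n - 1 - 0 by omega]
    apply Finset.sum_congr rfl
    intro i hi
    simp only [mem_range] at hi
    rw [hgt (0 + 1 + i) (by omega) (by omega), hgt (0 + 1 + i + 1) (by omega) (by omega),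
      show 0 + 1 + i - 1 = 0 + i by omega, show 0 + 1 + i + 1 - 1 = 0 + i + 1 by omega]
  rw [h0, ht, add_comm, range_eq_Ico]

end cnt

section chunk3

variable {n : ℕ} (π : Equiv.Perm (Fin n)) (j : Fin (n + 1))

lemma ins_hlt : ∀ i < (j : ℕ), permWord (ins π j) i = permWord π i := by
  intro i hi
  rw [permWord_ins π j i (by have := Nat.lt_succ_iff.mp j.isLt; omega), if_pos hi]

lemma ins_hself : permWord (ins π j) (j : ℕ) = n + 1 := by
  rw [permWord_ins π j _ (Nat.lt_succ_iff.mp j.isLt), if_neg (lt_irrefl _), if_pos rfl]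

lemma ins_hgt : ∀ i, (j : ℕ) < i → i ≤ n → permWord (ins π j) i = permWord π (i - 1) := by
  intro i h1 h2
  rw [permWord_ins π j i h2, if_neg (by omega), if_neg (by omega)]

lemma desNum_eq {m : ℕ} (σ : Equiv.Perm (Fin m)) :
    desNum σ = cntP (fun a b => b < a) (permWord σ) (m - 1) := by
  rw [cntP_eq_card]; rfl

lemma bascNum_eq {m : ℕ} (σ : Equiv.Perm (Fin m)) :
    bascNum σ = cntP (fun a b => a + 2 ≤ b) (permWord σ) (m - 1) := by
  rw [cntP_eq_card]; rfl

lemma sucNum_eq {m : ℕ} (σ : Equiv.Perm (Fin m)) :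
    sucNum σ = cntP (fun a b => b = a + 1) (permWord σ) (m - 1) := by
  rw [cntP_eq_card]; rfl

variable (hn : 1 ≤ n) (hj1 : 1 ≤ (j : ℕ))

include hn hj1 in
lemma des_ins :
    desNum (ins π j)
        + (if (j:ℕ) < n then (if permWord π j < permWord π ((j:ℕ) - 1) then 1 else 0) else 0)
      = desNum π + (if (j:ℕ) < n then 1 else 0) := by
  have hjn : (j:ℕ) ≤ n := Nat.lt_succ_iff.mp j.isLt
  have h := cnt_insert (fun a b => b < a) hn hj1 hjn (ins_hlt π j) (ins_hself π j) (ins_hgt π j)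
  beta_reduce at h
  rw [desNum_eq, desNum_eq, show n + 1 - 1 = n from rfl]
  rw [h]
  have h1 : ¬ (n + 1 < permWord π ((j:ℕ) - 1)) := by
    have := permWord_le π ((j:ℕ) - 1); omega
  rw [if_neg h1]
  have h2 : ∀ hh : (j:ℕ) < n,
      (if permWord π (j:ℕ) < n + 1 then (1:ℕ) else 0) = 1 := by
    intro _; rw [if_pos (by have := permWord_le π (j:ℕ); omega)]
  by_cases hc : (j:ℕ) < n
  · rw [if_pos hc, if_pos hc, h2 hc]
  · rw [if_neg hc, if_neg hc]

include hn hj1 in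
lemma basc_ins :
    bascNum (ins π j)
        + (if (j:ℕ) < n then (if permWord π ((j:ℕ) - 1) + 2 ≤ permWord π j then 1 else 0) else 0)
      = bascNum π + (if permWord π ((j:ℕ) - 1) + 2 ≤ n + 1 then 1 else 0) := by
  have hjn : (j:ℕ) ≤ n := Nat.lt_succ_iff.mp j.isLt
  have h := cnt_insert (fun a b => a + 2 ≤ b) hn hj1 hjn (ins_hlt π j) (ins_hself π j) (ins_hgt π j)
  beta_reduce at h
  rw [bascNum_eq, bascNum_eq, show n + 1 - 1 = n from rfl]
  rw [h]
  have h2 : ∀ hh : (j:ℕ) < n,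
      (if n + 1 + 2 ≤ permWord π (j:ℕ) then (1:ℕ) else 0) = 0 := by
    intro _; rw [if_neg (by have := permWord_le π (j:ℕ); omega)]
  by_cases hc : (j:ℕ) < n
  · rw [if_pos hc, h2 hc]; ring
  · rw [if_neg hc]; ring

include hn hj1 in
lemma suc_ins :
    sucNum (ins π j)
        + (if (j:ℕ) < n then (if permWord π j = permWord π ((j:ℕ) - 1) + 1 then 1 else 0) else 0)
      = sucNum π + (if permWord π ((j:ℕ) - 1) = n then 1 else 0) := by
  have hjn : (j:ℕ) ≤ n := Nat.lt_succ_iff.mp j.isLt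
  have h := cnt_insert (fun a b => b = a + 1) hn hj1 hjn (ins_hlt π j) (ins_hself π j) (ins_hgt π j)
  beta_reduce at h
  rw [sucNum_eq, sucNum_eq, show n + 1 - 1 = n from rfl]
  rw [h]
  have h1 : (if n + 1 = permWord π ((j:ℕ) - 1) + 1 then (1:ℕ) else 0)
      = (if permWord π ((j:ℕ) - 1) = n then 1 else 0) := by
    by_cases hc : permWord π ((j:ℕ) - 1) = n
    · rw [if_pos (by omega), if_pos hc]
    · rw [if_neg (by omega), if_neg hc]
  have h2 : ∀ hh : (j:ℕ) < n,
      (if permWord π (j:ℕ) = n + 1 + 1 then (1:ℕ) else 0) = 0 := by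
    intro _; rw [if_neg (by have := permWord_le π (j:ℕ); omega)]
  by_cases hc : (j:ℕ) < n
  · rw [if_pos hc, h2 hc, h1]; ring
  · rw [if_neg hc, h1]; ring

include hn in
lemma des_ins_zero (hj0 : (j : ℕ) = 0) : desNum (ins π j) = desNum π + 1 := by
  have h := cnt_insert_zero (fun a b => b < a) (u := permWord (ins π j)) (w := permWord π) hn
    (by rw [← hj0]; exact ins_hself π j) (fun i h1 h2 => ins_hgt π j i (by omega) h2)
  rw [desNum_eq, desNum_eq, show n + 1 - 1 = n from rfl, h,
    if_pos (by have := permWord_le π 0; omega)]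

include hn in
lemma basc_ins_zero (hj0 : (j : ℕ) = 0) : bascNum (ins π j) = bascNum π := by
  have h := cnt_insert_zero (fun a b => a + 2 ≤ b) (u := permWord (ins π j)) (w := permWord π) hn
    (by rw [← hj0]; exact ins_hself π j) (fun i h1 h2 => ins_hgt π j i (by omega) h2)
  rw [bascNum_eq, bascNum_eq, show n + 1 - 1 = n from rfl, h,
    if_neg (by have := permWord_le π 0; omega), add_zero]

include hn in
lemma suc_ins_zero (hj0 : (j : ℕ) = 0) : sucNum (ins π j) = sucNum π := by
  have h := cnt_insert_zero (fun a b => b = a + 1) (u := permWord (ins π j)) (w := permWord π) hn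
    (by rw [← hj0]; exact ins_hself π j) (fun i h1 h2 => ins_hgt π j i (by omega) h2)
  rw [sucNum_eq, sucNum_eq, show n + 1 - 1 = n from rfl, h,
    if_neg (by have := permWord_le π 0; omega), add_zero]

end chunk3


section chunk4
open Equiv
variable {n : ℕ}

/-- monomial of a permutation -/
noncomputable def mono {m : ℕ} (σ : Equiv.Perm (Fin m)) : MvPolynomial (Fin 3) ℤ :=
  X 0 ^ bascNum σ * X 1 ^ desNum σ * X 2 ^ sucNum σ

lemma trivEuler_eq (m : ℕ) : trivEuler m = ∑ π : Equiv.Perm (Fin m), mono π := rfl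

variable (π : Equiv.Perm (Fin n)) (j : Fin (n + 1)) (hn : 1 ≤ n)

include hn in
lemma mono_ins_zero (hj0 : (j : ℕ) = 0) : mono (ins π j) = X 1 * mono π := by
  unfold mono
  rw [des_ins_zero π j hn hj0, basc_ins_zero π j hn hj0, suc_ins_zero π j hn hj0]
  ring

variable (hj1 : 1 ≤ (j : ℕ))

include hn hj1 in
lemma mono_ins_S (hS : permWord π ((j:ℕ) - 1) = n) : mono (ins π j) = X 2 * mono π := by
  have hd := des_ins π j hn hj1
  have hb := basc_ins π j hn hj1
  have hs := suc_ins π j hn hj1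
  have hwle := permWord_le π (j:ℕ)
  have hne : (j:ℕ) < n → permWord π (j:ℕ) < n := by
    intro hc
    rcases lt_or_eq_of_le hwle with h | h
    · exact h
    · exact absurd (permWord_inj π hc (by omega) (h.trans hS.symm)) (by omega)
  have hd' : desNum (ins π j) = desNum π := by
    by_cases hc : (j:ℕ) < n
    · rw [if_pos hc, if_pos hc, if_pos (show permWord π (j:ℕ) < permWord π ((j:ℕ) - 1) by
        rw [hS]; exact hne hc)] at hd
      omega
    · rw [if_neg hc, if_neg hc] at hd; omega
  have hb' : bascNum (ins π j) = bascNum π := by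
    rw [if_neg (by omega : ¬ (permWord π ((j:ℕ) - 1) + 2 ≤ n + 1))] at hb
    by_cases hc : (j:ℕ) < n
    · rw [if_pos hc, if_neg (by rw [hS]; omega)] at hb; omega
    · rw [if_neg hc] at hb; omega
  have hs' : sucNum (ins π j) = sucNum π + 1 := by
    rw [if_pos hS] at hs
    by_cases hc : (j:ℕ) < n
    · rw [if_pos hc, if_neg (by rw [hS]; omega)] at hs; omega
    · rw [if_neg hc] at hs; omega
  unfold mono
  rw [hd', hb', hs']
  ring

include hn hj1 in
lemma mono_ins_X (hne : permWord π ((j:ℕ) - 1) ≠ n)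
    (hX : (j:ℕ) = n ∨ permWord π (j:ℕ) < permWord π ((j:ℕ) - 1)) :
    mono (ins π j) = X 0 * mono π := by
  have hd := des_ins π j hn hj1
  have hb := basc_ins π j hn hj1
  have hs := suc_ins π j hn hj1
  have hwle := permWord_le π ((j:ℕ) - 1)
  have hd' : desNum (ins π j) = desNum π := by
    by_cases hc : (j:ℕ) < n
    · rw [if_pos hc, if_pos hc, if_pos (hX.resolve_left (by omega))] at hd; omega
    · rw [if_neg hc, if_neg hc] at hd; omega
  have hb' : bascNum (ins π j) = bascNum π + 1 := by
    rw [if_pos (by omega : permWord π ((j:ℕ) - 1) + 2 ≤ n + 1)] at hb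
    by_cases hc : (j:ℕ) < n
    · rw [if_pos hc, if_neg (by have := hX.resolve_left (by omega); omega)] at hb; omega
    · rw [if_neg hc] at hb; omega
  have hs' : sucNum (ins π j) = sucNum π := by
    rw [if_neg hne] at hs
    by_cases hc : (j:ℕ) < n
    · rw [if_pos hc, if_neg (by have := hX.resolve_left (by omega); omega)] at hs; omega
    · rw [if_neg hc] at hs; omega
  unfold mono
  rw [hd', hb', hs']
  ring

include hn hj1 in
lemma mono_ins_XYS (hc : (j:ℕ) < n) (hsuc : permWord π (j:ℕ) = permWord π ((j:ℕ) - 1) + 1) :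
    1 ≤ sucNum π ∧
      mono (ins π j) = X 0 ^ (bascNum π + 1) * X 1 ^ (desNum π + 1) * X 2 ^ (sucNum π - 1) := by
  have hd := des_ins π j hn hj1
  have hb := basc_ins π j hn hj1
  have hs := suc_ins π j hn hj1
  have hwle := permWord_le π (j:ℕ)
  have hd' : desNum (ins π j) = desNum π + 1 := by
    rw [if_pos hc, if_pos hc, if_neg (by omega)] at hd; omega
  have hb' : bascNum (ins π j) = bascNum π + 1 := by
    rw [if_pos hc, if_neg (by omega), if_pos (by omega)] at hb; omega
  have hs' : sucNum (ins π j) + 1 = sucNum π := by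
    rw [if_pos hc, if_pos hsuc, if_neg (by omega)] at hs; omega
  refine ⟨by omega, ?_⟩
  unfold mono
  rw [hd', hb', show sucNum (ins π j) = sucNum π - 1 by omega]

include hn hj1 in
lemma mono_ins_Y (hc : (j:ℕ) < n) (hbasc : permWord π ((j:ℕ) - 1) + 2 ≤ permWord π (j:ℕ)) :
    mono (ins π j) = X 1 * mono π := by
  have hd := des_ins π j hn hj1
  have hb := basc_ins π j hn hj1
  have hs := suc_ins π j hn hj1
  have hwle := permWord_le π (j:ℕ)
  have hd' : desNum (ins π j) = desNum π + 1 := by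
    rw [if_pos hc, if_pos hc, if_neg (by omega)] at hd; omega
  have hb' : bascNum (ins π j) = bascNum π := by
    rw [if_pos hc, if_pos hbasc, if_pos (by omega)] at hb; omega
  have hs' : sucNum (ins π j) = sucNum π := by
    rw [if_pos hc, if_neg (by omega), if_neg (by omega)] at hs; omega
  unfold mono
  rw [hd', hb', hs']
  ring

end chunk4


section chunk5
variable {n : ℕ} (π : Equiv.Perm (Fin n))

/-- position of the letter `n` -/
def posTop (hn : 1 ≤ n) : ℕ := ((π.symm ⟨n - 1, by omega⟩ : Fin n) : ℕ)

lemma posTop_lt (hn : 1 ≤ n) : posTop π hn < n := (π.symm _).isLt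

lemma permWord_eq_top_iff (hn : 1 ≤ n) {k : ℕ} (hk : k < n) :
    permWord π k = n ↔ k = posTop π hn := by
  unfold permWord posTop
  rw [dif_pos hk]
  constructor
  · intro h
    have h1 : π ⟨k, hk⟩ = ⟨n - 1, by omega⟩ := Fin.ext (by simp; omega)
    have := congrArg (fun t => (π.symm t : ℕ)) h1
    simpa using this
  · intro h
    have : (⟨k, hk⟩ : Fin n) = π.symm ⟨n - 1, by omega⟩ := Fin.ext h
    rw [this]
    simp
    omega

lemma permWord_ne (hn : 1 ≤ n) {i k : ℕ} (hik : i ≠ k) (hi : i < n) (hk : k < n) :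
    permWord π i ≠ permWord π k := fun h => hik (permWord_inj π hi hk h)

lemma cardA (hn : 1 ≤ n) :
    ((range n).filter fun i => permWord π i = n).card = 1 := by
  have : ((range n).filter fun i => permWord π i = n) = {posTop π hn} := by
    ext k
    simp only [mem_filter, mem_range, mem_singleton]
    constructor
    · rintro ⟨h1, h2⟩
      exact (permWord_eq_top_iff π hn h1).mp h2
    · intro h
      subst h
      exact ⟨posTop_lt π hn, (permWord_eq_top_iff π hn (posTop_lt π hn)).mpr rfl⟩
  rw [this, card_singleton]

lemma cardB (hn : 1 ≤ n) :
    (((range n).filter fun i => ¬ permWord π i = n).filter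
        fun i => i + 1 = n ∨ permWord π (i + 1) < permWord π i).card = desNum π := by
  rw [desNum]
  apply Finset.card_bij' (fun a _ => if a + 1 = n then posTop π hn else a)
    (fun a _ => if permWord π a = n then n - 1 else a)
  · -- maps into descents
    intro a ha
    simp only [mem_filter, mem_range] at ha
    obtain ⟨⟨h1, h2⟩, h3⟩ := ha
    by_cases hc : a + 1 = n
    · rw [if_pos hc]
      have hk := posTop_lt π hn
      have hkn : permWord π (posTop π hn) = n := (permWord_eq_top_iff π hn hk).mpr rfl
      have hne : posTop π hn ≠ n - 1 := by
        intro h; apply h2; rw [show a = n - 1 by omega, ← h]; exact hkn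
      have hk1 : posTop π hn + 1 < n := by omega
      simp only [mem_filter, mem_range]
      refine ⟨by omega, ?_⟩
      have := permWord_ne π hn (show posTop π hn + 1 ≠ posTop π hn by omega) hk1 hk
      have hle := permWord_le π (posTop π hn + 1)
      omega
    · rw [if_neg hc]
      simp only [mem_filter, mem_range]
      exact ⟨by omega, h3.resolve_left hc⟩
  · -- reverse maps into B
    intro a ha
    simp only [mem_filter, mem_range] at ha
    obtain ⟨h1, h2⟩ := ha
    by_cases hc : permWord π a = n
    · rw [if_pos hc]
      simp only [mem_filter, mem_range]
      have hne : permWord π (n - 1) ≠ n := by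
        have := permWord_ne π hn (show n - 1 ≠ a by omega) (by omega) (by omega)
        rw [hc] at this; exact this
      exact ⟨⟨by omega, hne⟩, Or.inl (by omega)⟩
    · rw [if_neg hc]
      simp only [mem_filter, mem_range]
      exact ⟨⟨by omega, hc⟩, Or.inr h2⟩
  · -- left inverse
    intro a ha
    simp only [mem_filter, mem_range] at ha
    obtain ⟨⟨h1, h2⟩, h3⟩ := ha
    by_cases hc : a + 1 = n
    · rw [if_pos hc, if_pos ((permWord_eq_top_iff π hn (posTop_lt π hn)).mpr rfl)]
      omega
    · rw [if_neg hc, if_neg h2]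
  · -- right inverse
    intro a ha
    simp only [mem_filter, mem_range] at ha
    obtain ⟨h1, h2⟩ := ha
    by_cases hc : permWord π a = n
    · rw [if_pos hc, if_pos (by omega)]
      exact ((permWord_eq_top_iff π hn (by omega)).mp hc).symm
    · rw [if_neg hc, if_neg (by omega)]

lemma cardC (hn : 1 ≤ n) :
    ((((range n).filter fun i => ¬ permWord π i = n).filter
        fun i => ¬ (i + 1 = n ∨ permWord π (i + 1) < permWord π i)).filter
        fun i => permWord π (i + 1) = permWord π i + 1).card = sucNum π := by
  rw [sucNum]
  congr 1
  ext i
  simp only [mem_filter, mem_range, not_or, not_lt]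
  constructor
  · rintro ⟨⟨⟨h1, h2⟩, h3, h4⟩, h5⟩
    exact ⟨by omega, h5⟩
  · rintro ⟨h1, h2⟩
    have hle := permWord_le π (i + 1)
    refine ⟨⟨⟨by omega, by omega⟩, by omega, by omega⟩, h2⟩

lemma cardD (hn : 1 ≤ n) :
    ((((range n).filter fun i => ¬ permWord π i = n).filter
        fun i => ¬ (i + 1 = n ∨ permWord π (i + 1) < permWord π i)).filter
        fun i => ¬ permWord π (i + 1) = permWord π i + 1).card = bascNum π := by
  rw [bascNum]
  congr 1
  ext i
  simp only [mem_filter, mem_range, not_or, not_lt]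
  constructor
  · rintro ⟨⟨⟨h1, h2⟩, h3, h4⟩, h5⟩
    have hne := permWord_ne π hn (show i ≠ i + 1 by omega) (by omega) (by omega)
    exact ⟨by omega, by omega⟩
  · rintro ⟨h1, h2⟩
    have hle := permWord_le π (i + 1)
    refine ⟨⟨⟨by omega, by omega⟩, by omega, by omega⟩, by omega⟩

end chunk5


section chunk6
variable {n : ℕ}

lemma pd0 (π : Equiv.Perm (Fin n)) :
    X 0 * X 1 * pderiv 0 (mono π) = bascNum π • (X 1 * mono π) := by
  unfold mono
  cases hb : bascNum π with
  | zero => simp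
  | succ k =>
      rw [pderiv_mul, pderiv_mul, pderiv_pow, pderiv_pow, pderiv_pow,
        pderiv_X_self, pderiv_X_of_ne (by decide : (1 : Fin 3) ≠ 0),
        pderiv_X_of_ne (by decide : (2 : Fin 3) ≠ 0)]
      rw [show k + 1 - 1 = k from rfl]
      rw [nsmul_eq_mul]
      push_cast
      ring

lemma pd1 (π : Equiv.Perm (Fin n)) :
    X 0 * X 1 * pderiv 1 (mono π) = desNum π • (X 0 * mono π) := by
  unfold mono
  cases hb : desNum π with
  | zero => simp
  | succ k =>
      rw [pderiv_mul, pderiv_mul, pderiv_pow, pderiv_pow, pderiv_pow,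
        pderiv_X_self, pderiv_X_of_ne (by decide : (0 : Fin 3) ≠ 1),
        pderiv_X_of_ne (by decide : (2 : Fin 3) ≠ 1)]
      rw [show k + 1 - 1 = k from rfl]
      rw [nsmul_eq_mul]
      push_cast
      ring

lemma pd2 (π : Equiv.Perm (Fin n)) :
    X 0 * X 1 * pderiv 2 (mono π) =
      sucNum π • (X 0 ^ (bascNum π + 1) * X 1 ^ (desNum π + 1) * X 2 ^ (sucNum π - 1)) := by
  unfold mono
  cases hb : sucNum π with
  | zero => simp
  | succ k =>
      rw [pderiv_mul, pderiv_mul, pderiv_pow, pderiv_pow, pderiv_pow,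
        pderiv_X_self, pderiv_X_of_ne (by decide : (0 : Fin 3) ≠ 2),
        pderiv_X_of_ne (by decide : (1 : Fin 3) ≠ 2)]
      rw [show k + 1 - 1 = k from rfl]
      rw [nsmul_eq_mul]
      push_cast
      ring

lemma sum_ins (π : Equiv.Perm (Fin n)) (hn : 1 ≤ n) :
    ∑ j : Fin (n + 1), mono (ins π j) =
      (X 2 + X 1) * mono π +
        X 0 * X 1 * (pderiv 0 (mono π) + pderiv 1 (mono π) + pderiv 2 (mono π)) := by
  rw [Fin.sum_univ_succ]
  have h0 : mono (ins π (0 : Fin (n + 1))) = X 1 * mono π :=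
    mono_ins_zero π 0 hn rfl
  have hG : ∀ i : Fin n, mono (ins π (Fin.succ i)) =
      (fun k : ℕ => if permWord π k = n then X 2 * mono π
        else if k + 1 = n ∨ permWord π (k + 1) < permWord π k then X 0 * mono π
        else if permWord π (k + 1) = permWord π k + 1 then
          X 0 ^ (bascNum π + 1) * X 1 ^ (desNum π + 1) * X 2 ^ (sucNum π - 1)
        else X 1 * mono π) (i : ℕ) := by
    intro i
    have hv : ((Fin.succ i : Fin (n + 1)) : ℕ) = (i : ℕ) + 1 := rfl
    have hj1 : 1 ≤ ((Fin.succ i : Fin (n + 1)) : ℕ) := by rw [hv]; omega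
    have hv1 : ((Fin.succ i : Fin (n + 1)) : ℕ) - 1 = (i : ℕ) := by rw [hv]; omega
    have hi : (i : ℕ) < n := i.isLt
    simp only
    by_cases hS : permWord π (i : ℕ) = n
    · rw [if_pos hS]
      exact mono_ins_S π _ hn hj1 (by rw [hv1]; exact hS)
    · rw [if_neg hS]
      by_cases hX : (i : ℕ) + 1 = n ∨ permWord π ((i : ℕ) + 1) < permWord π (i : ℕ)
      · rw [if_pos hX]
        exact mono_ins_X π _ hn hj1 (by rw [hv1]; exact hS)
          (by rw [hv1, hv]; exact hX)
      · rw [if_neg hX]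
        push_neg at hX
        obtain ⟨hX1, hX2⟩ := hX
        have hlt : ((Fin.succ i : Fin (n + 1)) : ℕ) < n := by omega
        by_cases hsuc : permWord π ((i : ℕ) + 1) = permWord π (i : ℕ) + 1
        · rw [if_pos hsuc]
          exact (mono_ins_XYS π _ hn hj1 hlt (by rw [hv1, hv]; exact hsuc)).2
        · rw [if_neg hsuc]
          have hne := permWord_ne π hn (show (i:ℕ) ≠ (i:ℕ) + 1 by omega) hi (by omega)
          exact mono_ins_Y π _ hn hj1 hlt (by rw [hv1, hv]; omega)
  have hsum : (∑ i : Fin n, mono (ins π (Fin.succ i))) =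
      ∑ k ∈ range n, (if permWord π k = n then X 2 * mono π
        else if k + 1 = n ∨ permWord π (k + 1) < permWord π k then X 0 * mono π
        else if permWord π (k + 1) = permWord π k + 1 then
          X 0 ^ (bascNum π + 1) * X 1 ^ (desNum π + 1) * X 2 ^ (sucNum π - 1)
        else X 1 * mono π) := by
    rw [Finset.sum_congr rfl (fun i _ => hG i)]
    exact Fin.sum_univ_eq_sum_range (fun k : ℕ => if permWord π k = n then X 2 * mono π
      else if k + 1 = n ∨ permWord π (k + 1) < permWord π k then X 0 * mono π
      else if permWord π (k + 1) = permWord π k + 1 then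
        X 0 ^ (bascNum π + 1) * X 1 ^ (desNum π + 1) * X 2 ^ (sucNum π - 1)
      else X 1 * mono π) n
  rw [hsum]
  rw [Finset.sum_ite, Finset.sum_ite, Finset.sum_ite,
    Finset.sum_const, Finset.sum_const, Finset.sum_const, Finset.sum_const]
  rw [cardA π hn, cardB π hn, cardC π hn, cardD π hn]
  rw [h0]
  have hr : (X 2 + X 1) * mono π +
      X 0 * X 1 * (pderiv 0 (mono π) + pderiv 1 (mono π) + pderiv 2 (mono π)) =
      (X 2 + X 1) * mono π + (X 0 * X 1 * pderiv 0 (mono π) +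
        X 0 * X 1 * pderiv 1 (mono π) + X 0 * X 1 * pderiv 2 (mono π)) := by ring
  rw [hr, pd0, pd1, pd2]
  simp only [one_smul, nsmul_eq_mul]
  ring

end chunk6

/-- For `n ≥ 1`:
`A_{n+1}(x,y,s) = (s+y)·A_n(x,y,s) + xy(∂/∂x + ∂/∂y + ∂/∂s)A_n(x,y,s)`. -/
theorem stmt3 (n : ℕ) (hn : 1 ≤ n) :
    trivEuler (n + 1) =
      (X 2 + X 1) * trivEuler n +
        X 0 * X 1 *
          (pderiv 0 (trivEuler n) + pderiv 1 (trivEuler n) + pderiv 2 (trivEuler n)) := by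
  calc trivEuler (n + 1) = ∑ σ : Equiv.Perm (Fin (n + 1)), mono σ := trivEuler_eq _
    _ = ∑ p : Equiv.Perm (Fin n) × Fin (n + 1), mono (ins p.1 p.2) :=
        (Fintype.sum_bijective _ ins_bijective _ _ (fun p => rfl)).symm
    _ = ∑ π : Equiv.Perm (Fin n), ∑ j : Fin (n + 1), mono (ins π j) := by exact Fintype.sum_prod_type (fun p => mono (ins p.1 p.2))
    _ = ∑ π : Equiv.Perm (Fin n), ((X 2 + X 1) * mono π +
          X 0 * X 1 * (pderiv 0 (mono π) + pderiv 1 (mono π) + pderiv 2 (mono π))) :=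
        Finset.sum_congr rfl (fun π _ => sum_ins π hn)
    _ = (X 2 + X 1) * trivEuler n +
          X 0 * X 1 * (pderiv 0 (trivEuler n) + pderiv 1 (trivEuler n) + pderiv 2 (trivEuler n)) := by
        rw [trivEuler_eq n, Finset.sum_add_distrib]
        congr 1
        · rw [Finset.mul_sum]
        · rw [map_sum, map_sum, map_sum, ← Finset.sum_add_distrib, ← Finset.sum_add_distrib,
            ← Finset.mul_sum]
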